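/- Let {p, q, r} be a Farey triple with p < q < r (in the order on ℚ∞ in which ∞ is the greatest element). Then 2q⊖p = q⊕r, 2q⊖r = q⊕p, and 2p⊖q = 2r⊖q = p⊖r, where for x, y ∈ ℚ∞ one defines 2x⊖y to be the element of ℚ∞ represented by the fraction (2d(x)−d(y))/(2r(x)−r(y)). -/
import Mathlib


/-- `ℚ∞ = ℚ ∪ {∞}`, ordered with `∞ = ⊤` as the greatest element. -/
abbrev QInf : Type := WithTop ℚ

/-- The numerator `d(q)` of the reduced representation `q = d(q)/r(q)`; `d(∞) = 1`. -/
def fnum : QInf → ℤ := WithTop.recTopCoe 1 (fun q => q.num)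

/-- The denominator `r(q)` of the reduced representation `q = d(q)/r(q)`; `r(∞) = 0`. -/
def fden : QInf → ℤ := WithTop.recTopCoe 0 (fun q => (q.den : ℤ))

/-- The element of `ℚ∞` represented by the fraction `a / b`: it is `∞` if `b = 0`,
and otherwise the rational number `a / b` (normalized so that the denominator is
positive and the fraction is in lowest terms). -/
def fmk (a b : ℤ) : QInf := if b = 0 then (⊤ : QInf) else (((a : ℚ) / (b : ℚ)) : ℚ)

/-- The Farey distance `Δ(p,q) = |d(p)r(q) - d(q)r(p)|`. -/
def fdist (p q : QInf) : ℤ := |fnum p * fden q - fnum q * fden p|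

/-- `p` and `q` are Farey neighbours if `Δ(p,q) = 1`. -/
def FareyNbr (p q : QInf) : Prop := fdist p q = 1

/-- The Farey sum `p ⊕ q = (d(p) + d(q)) / (r(p) + r(q))`. -/
def fsum (p q : QInf) : QInf := fmk (fnum p + fnum q) (fden p + fden q)

/-- The Farey difference `p ⊖ q = (d(p) - d(q)) / (r(p) - r(q))`. -/
def fdiff (p q : QInf) : QInf := fmk (fnum p - fnum q) (fden p - fden q)

/-- A Farey triple: a three-element subset of `ℚ∞` whose elements are pairwise
Farey neighbours. -/
def IsFareyTriple (s : Set QInf) : Prop := s.ncard = 3 ∧ s.Pairwise FareyNbr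

/-- The element replacing `p` in the mutation of the Farey triple `{p, q, r}` in
direction `p`: it is `q ⊖ r` if `p` lies strictly between `q` and `r`, and `q ⊕ r`
otherwise. -/
def fareyMutEl (p q r : QInf) : QInf :=
  if (q < p ∧ p < r) ∨ (r < p ∧ p < q) then fdiff q r else fsum q r

/-- The mutation of the Farey triple `{p, q, r}` in direction `p`. -/
def fareyMut (p q r : QInf) : Set QInf := {fareyMutEl p q r, q, r}

/-- The complexity `c(q) = |d(q)| + r(q) + |d(q) - r(q)|`. -/
def complexity (x : QInf) : ℤ := |fnum x| + fden x + |fnum x - fden x|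

/-- For `x, y ∈ ℚ∞`, the element `2x ⊖ y` of `ℚ∞` represented by the fraction
`(2 d(x) - d(y)) / (2 r(x) - r(y))`. -/
def twoSub (x y : QInf) : QInf := fmk (2 * fnum x - fnum y) (2 * fden x - fden y)

lemma fnum_coe (x : ℚ) : fnum ↑x = x.num := rfl
lemma fden_coe (x : ℚ) : fden ↑x = (x.den : ℤ) := rfl
lemma fnum_top : fnum ⊤ = 1 := rfl
lemma fden_top : fden ⊤ = 0 := rfl

lemma fmk_neg_neg (a b : ℤ) : fmk (-a) (-b) = fmk a b := by
  unfold fmk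
  rcases eq_or_ne b 0 with h | h
  · simp [h]
  · rw [if_neg (by simpa using h), if_neg h]
    push_cast
    rw [neg_div_neg_eq]

lemma rat_lt_cross {x y : ℚ} (h : x < y) : x.num * y.den < y.num * x.den := by
  rw [← Rat.num_div_den x, ← Rat.num_div_den y,
    div_lt_div_iff₀ (by exact_mod_cast x.pos) (by exact_mod_cast y.pos)] at h
  exact_mod_cast h

/-- If `{p, q, r}` is a Farey triple with `p < q < r`, then `2q ⊖ p = q ⊕ r`,
`2q ⊖ r = q ⊕ p`, and `2p ⊖ q = 2r ⊖ q = p ⊖ r`. -/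
theorem fareyTriple_twoSub_identities (p q r : QInf)
    (hpq : p < q) (hqr : q < r)
    (h1 : FareyNbr p q) (h2 : FareyNbr p r) (h3 : FareyNbr q r) :
    twoSub q p = fsum q r ∧ twoSub q r = fsum q p ∧
      twoSub p q = fdiff p r ∧ twoSub r q = fdiff p r := by
  -- p and q are finite
  lift p to ℚ using (hpq.trans hqr).ne_top with p₀
  lift q to ℚ using hqr.ne_top with q₀
  -- key claim: q is the mediant of p and r
  have key : fnum ↑q₀ = fnum ↑p₀ + fnum r ∧ fden ↑q₀ = fden ↑p₀ + fden r := by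
    have hlt : (p₀ : ℚ) < q₀ := by exact_mod_cast hpq
    have hcross := rat_lt_cross hlt
    rcases eq_or_ne r ⊤ with hr | hr
    · subst hr
      have hb : (p₀.den : ℤ) = 1 := by
        have := h2
        simp only [FareyNbr, fdist, fnum_coe, fden_coe, fnum_top, fden_top,
          mul_zero, one_mul, zero_sub, abs_neg, Int.abs_natCast] at this
        omega
      have hd : (q₀.den : ℤ) = 1 := by
        have := h3
        simp only [FareyNbr, fdist, fnum_coe, fden_coe, fnum_top, fden_top,
          mul_zero, one_mul, zero_sub, abs_neg, Int.abs_natCast] at this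
        omega
      have h1' := h1
      simp only [FareyNbr, fdist, fnum_coe, fden_coe] at h1'
      constructor
      · simp only [fnum_coe, fnum_top]
        rw [hb, hd] at h1' hcross
        rcases abs_eq (by norm_num : (0:ℤ) ≤ 1) |>.mp h1' with h | h <;> omega
      · simp only [fden_coe, fden_top]
        omega
    · lift r to ℚ using hr with r₀
      have hlt2 : (q₀ : ℚ) < r₀ := by exact_mod_cast hqr
      have hcross2 := rat_lt_cross hlt2
      have hcross3 := rat_lt_cross (hlt.trans hlt2)
      simp only [FareyNbr, fdist, fnum_coe, fden_coe] at h1 h2 h3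
      set a := p₀.num with ha
      set b := (p₀.den : ℤ) with hb
      set c := q₀.num with hc
      set d := (q₀.den : ℤ) with hd
      set e := r₀.num with he
      set f := (r₀.den : ℤ) with hf
      have hp1 : a * d - c * b = -1 := by
        rcases abs_eq (by norm_num : (0:ℤ) ≤ 1) |>.mp h1 with h | h <;> omega
      have hp2 : a * f - e * b = -1 := by
        rcases abs_eq (by norm_num : (0:ℤ) ≤ 1) |>.mp h2 with h | h <;> omega
      have hp3 : c * f - e * d = -1 := by
        rcases abs_eq (by norm_num : (0:ℤ) ≤ 1) |>.mp h3 with h | h <;> omega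
      have hud : (a + e - c) * d = (b + f - d) * c := by linear_combination hp1 - hp3
      have hub : (a + e - c) * b = (b + f - d) * a := by linear_combination hp1 - hp2
      have hu0 : a + e - c = 0 := by
        have h0 : (a + e - c) * (a * d - c * b) = 0 := by
          linear_combination a * hud - c * hub
        rw [hp1] at h0; omega
      have hv0 : b + f - d = 0 := by
        have h0 : (b + f - d) * (c * b - a * d) = 0 := by
          linear_combination d * hub - b * hud
        rw [show c * b - a * d = 1 by omega] at h0; omega
      exact ⟨by simp only [fnum_coe]; omega, by simp only [fden_coe]; omega⟩
  obtain ⟨hc, hd⟩ := key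
  refine ⟨?_, ?_, ?_, ?_⟩
  · simp only [twoSub, fsum]; congr 1 <;> omega
  · simp only [twoSub, fsum]; congr 1 <;> omega
  · simp only [twoSub, fdiff]; congr 1 <;> omega
  · rw [twoSub, fdiff, ← fmk_neg_neg (fnum ↑p₀ - fnum r) (fden ↑p₀ - fden r)]
    congr 1 <;> omega
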